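/- Let V, W ∈ Gr₂(n,k), let H_B and H_C be finite-dimensional complex Hilbert spaces, let {C_z^V}_{z ∈ CS(V^⊥)} be a PVM on H_C and {B_x^W}_{x ∈ CS(W)} a PVM on H_B. Define the operators on (ℂ²)^{⊗n} ⊗ H_B ⊗ H_C: P^V = ∑_{x ∈ CS(V), z ∈ CS(V^⊥)} |V_{x,z}⟩⟨V_{x,z}| ⊗ Id_B ⊗ C_z^V and Q^W = ∑_{x ∈ CS(W), z ∈ CS(W^⊥)} |W_{x,z}⟩⟨W_{x,z}| ⊗ B_x^W ⊗ Id_C. Then ‖P^V Q^W‖ ≤ √(2^{dim(V ∩ W) − k}). -/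

import Mathlib

open scoped Classical Kronecker Matrix.Norms.L2Operator

/-- The coset state `|W_{x,z}⟩ = 2^{-k/2} ∑_{u ∈ W} (-1)^{z·u} |x+u⟩` in `(ℂ²)^{⊗n}`,
written as a vector of coordinates in the computational basis `{|v⟩ : v ∈ 𝔽₂ⁿ}`. -/
noncomputable def cosetVec {n : ℕ} (W : Submodule (ZMod 2) (Fin n → ZMod 2))
    (x z : Fin n → ZMod 2) : (Fin n → ZMod 2) → ℂ :=
  (((Real.sqrt 2 : ℝ) : ℂ) ^ (Module.finrank (ZMod 2) W))⁻¹ •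
    ∑ u : W, ((-1 : ℂ) ^ (dotProduct z (u : Fin n → ZMod 2)).val) •
      (Pi.single (x + (u : Fin n → ZMod 2)) (1 : ℂ) : (Fin n → ZMod 2) → ℂ)

/-- The rank-one operator `|ψ⟩⟨φ|`, as a matrix in the computational basis. -/
noncomputable def outerMat {ι : Type*} (ψ φ : ι → ℂ) : Matrix ι ι ℂ :=
  Matrix.of fun i j => ψ i * (starRingEnd ℂ) (φ j)

/-- The dual space `W^⊥ = {y ∈ 𝔽₂ⁿ : x·y = 0 for all x ∈ W}` with respect to the standard
bilinear form `x·y = ∑ᵢ xᵢyᵢ`. -/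
def dualSpace {n : ℕ} (W : Submodule (ZMod 2) (Fin n → ZMod 2)) :
    Submodule (ZMod 2) (Fin n → ZMod 2) where
  carrier := {y | ∀ x ∈ W, dotProduct x y = 0}
  add_mem' := by
    intro a b ha hb x hx
    simp [dotProduct_add, ha x hx, hb x hx]
  zero_mem' := by
    intro x hx
    simp
  smul_mem' := by
    intro c a ha x hx
    simp [dotProduct_smul, ha x hx]

/-- `T` is a set of coset representatives of the subspace `W` in `𝔽₂ⁿ`: it contains exactly
one vector from each coset of `W`. -/
def IsCosetReps {n : ℕ} (W : Submodule (ZMod 2) (Fin n → ZMod 2))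
    (T : Set (Fin n → ZMod 2)) : Prop :=
  ∀ v : Fin n → ZMod 2, ∃! x, x ∈ T ∧ v - x ∈ W

/-- A PVM (projection-valued measure) on a finite-dimensional Hilbert space, in matrix form:
a finite family of orthogonal projections, mutually orthogonal, summing to the identity. -/
def IsPVM {ι X : Type*} [Fintype ι] [DecidableEq ι] [Fintype X] (P : X → Matrix ι ι ℂ) :
    Prop :=
  (∀ x, (P x).IsHermitian) ∧ (∀ x, P x * P x = P x) ∧
    (∀ x y, x ≠ y → P x * P y = 0) ∧ ∑ x, P x = 1

namespace Stmt12

open scoped Matrix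

noncomputable def signC (a : ZMod 2) : ℂ := (-1 : ℂ) ^ a.val

lemma zmod2_cases : ∀ a : ZMod 2, a = 0 ∨ a = 1 := by decide

lemma signC_zero : signC 0 = 1 := rfl
lemma signC_one : signC 1 = -1 := by norm_num [signC, ZMod.val_one]

lemma signC_add (a b : ZMod 2) : signC (a + b) = signC a * signC b := by
  rcases zmod2_cases a with ha | ha <;> rcases zmod2_cases b with hb | hb <;>
    subst ha <;> subst hb <;>
    simp [signC_zero, signC_one, show (1 + 1 : ZMod 2) = 0 from rfl]

lemma signC_mul_self (a : ZMod 2) : signC a * signC a = 1 := by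
  rcases zmod2_cases a with h | h <;> subst h <;> simp [signC_zero, signC_one]

lemma star_signC (a : ZMod 2) : (starRingEnd ℂ) (signC a) = signC a := by
  rcases zmod2_cases a with h | h <;> subst h <;> simp [signC_zero, signC_one]

lemma addself {n : ℕ} (v : Fin n → ZMod 2) : v + v = 0 := by
  funext i
  rcases zmod2_cases (v i) with h | h <;> simp [Pi.add_apply, h] <;> rfl

lemma subeq {n : ℕ} (v w : Fin n → ZMod 2) : v - w = v + w := by
  funext i
  rcases zmod2_cases (v i) with h | h <;> rcases zmod2_cases (w i) with h' | h' <;>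
    simp [Pi.sub_apply, Pi.add_apply, h, h'] <;> rfl

/-- complex zero-divisor helper -/
lemma eq_zero_of_self_eq_neg {S : ℂ} (h : S = -S) : S = 0 := by
  have h2 : (2 : ℂ) * S = 0 := by linear_combination h
  rcases mul_eq_zero.mp h2 with h3 | h3
  · norm_num at h3
  · exact h3

/-- distinct coset representatives differ by a non-element -/
lemma reps_inj {n : ℕ} {W : Submodule (ZMod 2) (Fin n → ZMod 2)}
    {T : Set (Fin n → ZMod 2)} (hT : IsCosetReps W T) {x x' : Fin n → ZMod 2}
    (hx : x ∈ T) (hx' : x' ∈ T) (h : x - x' ∈ W) : x = x' := by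
  exact ((hT x).unique ⟨hx', h⟩ ⟨hx, by simp⟩).symm

lemma char_sum_subspace {n : ℕ} (V : Submodule (ZMod 2) (Fin n → ZMod 2))
    (s u₀ : Fin n → ZMod 2) (hu₀ : u₀ ∈ V) (h1 : dotProduct s u₀ = 1) :
    ∑ u : V, signC (dotProduct s (u : Fin n → ZMod 2)) = 0 := by
  apply eq_zero_of_self_eq_neg
  have h2 : ∑ u : V, signC (dotProduct s ((((⟨u₀, hu₀⟩ : V) + u : V)) : Fin n → ZMod 2)) =
      ∑ u : V, signC (dotProduct s (u : Fin n → ZMod 2)) :=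
    Fintype.sum_equiv (Equiv.addLeft (⟨u₀, hu₀⟩ : V)) _ _ (fun u => rfl)
  have h3 : ∀ u : V, signC (dotProduct s ((((⟨u₀, hu₀⟩ : V) + u : V)) : Fin n → ZMod 2)) =
      -signC (dotProduct s (u : Fin n → ZMod 2)) := by
    intro u
    rw [Submodule.coe_add, dotProduct_add, signC_add]
    simp only [Submodule.coe_mk, h1, signC_one]
    ring_nf
  have hneg : ∑ u : V, signC (dotProduct s ((((⟨u₀, hu₀⟩ : V) + u : V)) : Fin n → ZMod 2)) =
      -∑ u : V, signC (dotProduct s (u : Fin n → ZMod 2)) := by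
    rw [Finset.sum_congr rfl fun u _ => h3 u]
    simp
  exact h2.symm.trans hneg

lemma char_sum_reps {n : ℕ} (W : Submodule (ZMod 2) (Fin n → ZMod 2))
    (T : Set (Fin n → ZMod 2)) (hT : IsCosetReps (dualSpace W) T)
    (w : Fin n → ZMod 2) (hw : w ∈ W) (hw0 : w ≠ 0) :
    ∑ z : T, signC (dotProduct (z : Fin n → ZMod 2) w) = 0 := by
  obtain ⟨i, hi⟩ : ∃ i, w i ≠ 0 := by
    by_contra h
    push_neg at h
    exact hw0 (funext fun i => h i)
  have hwi : w i = 1 := (zmod2_cases (w i)).resolve_left hi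
  set z₀ : Fin n → ZMod 2 := Pi.single i 1 with hz₀def
  have hz₀w : dotProduct z₀ w = 1 := by
    rw [hz₀def, single_dotProduct, hwi, one_mul]
  -- the representative map
  have hex : ∀ v : Fin n → ZMod 2,
      (hT v).choose ∈ T ∧ v - (hT v).choose ∈ dualSpace W := (fun v => (hT v).choose_spec.1)
  have huniq : ∀ v y, y ∈ T → v - y ∈ dualSpace W → y = (hT v).choose :=
    fun v y h1 h2 => (hT v).choose_spec.2 y ⟨h1, h2⟩
  set σ : T → T := fun z => ⟨(hT ((z : Fin n → ZMod 2) + z₀)).choose, (hex _).1⟩ with hσdef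
  have hσmem : ∀ z : T, ((z : Fin n → ZMod 2) + z₀) - ((σ z : Fin n → ZMod 2)) ∈ dualSpace W :=
    fun z => (hex _).2
  have hσσ : ∀ z : T, σ (σ z) = z := by
    intro z
    apply Subtype.ext
    refine (huniq (((σ z : Fin n → ZMod 2)) + z₀) (z : Fin n → ZMod 2) z.2 ?_).symm
    have h1 := hσmem z
    rw [subeq] at h1 ⊢
    have he : (σ z : Fin n → ZMod 2) + z₀ + (z : Fin n → ZMod 2) =
        (z : Fin n → ZMod 2) + z₀ + (σ z : Fin n → ZMod 2) := by abel
    rw [he]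
    exact h1
  have hσflip : ∀ z : T, signC (dotProduct ((σ z : Fin n → ZMod 2)) w) =
      -signC (dotProduct (z : Fin n → ZMod 2) w) := by
    intro z
    have h0 : dotProduct w (((z : Fin n → ZMod 2) + z₀) - ((σ z : Fin n → ZMod 2))) = 0 :=
      hσmem z w hw
    rw [dotProduct_sub, sub_eq_zero] at h0
    rw [dotProduct_comm, ← h0, dotProduct_add, signC_add,
      dotProduct_comm w z₀, hz₀w, signC_one, dotProduct_comm]
    ring
  apply eq_zero_of_self_eq_neg
  have h2 : ∑ z : T, signC (dotProduct ((σ z : Fin n → ZMod 2)) w) =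
      ∑ z : T, signC (dotProduct (z : Fin n → ZMod 2) w) :=
    Fintype.sum_bijective σ (Function.Involutive.bijective hσσ) _ _ (fun z => rfl)
  have hneg : ∑ z : T, signC (dotProduct ((σ z : Fin n → ZMod 2)) w) =
      -∑ z : T, signC (dotProduct (z : Fin n → ZMod 2) w) := by
    rw [Finset.sum_congr rfl fun z _ => hσflip z]
    simp
  exact h2.symm.trans hneg

/-- entry formula for `cosetVec` -/
lemma cosetVec_apply {n : ℕ} (W : Submodule (ZMod 2) (Fin n → ZMod 2))
    (x z v : Fin n → ZMod 2) :
    cosetVec W x z v = (((Real.sqrt 2 : ℝ) : ℂ) ^ (Module.finrank (ZMod 2) W))⁻¹ *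
      (if v - x ∈ W then signC (dotProduct z (v - x)) else 0) := by
  rw [cosetVec, Pi.smul_apply, smul_eq_mul]
  congr 1
  rw [Finset.sum_apply]
  have key : ∀ u : W, (((-1 : ℂ) ^ (dotProduct z (u : Fin n → ZMod 2)).val) •
      (Pi.single (x + (u : Fin n → ZMod 2)) (1 : ℂ) : (Fin n → ZMod 2) → ℂ)) v =
      if v = x + (u : Fin n → ZMod 2) then signC (dotProduct z (u : Fin n → ZMod 2)) else 0 := by
    intro u
    rw [Pi.smul_apply, Pi.single_apply, smul_eq_mul]
    by_cases h : v = x + (u : Fin n → ZMod 2) <;> simp [h, signC]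
  rw [Finset.sum_congr rfl fun u _ => key u]
  by_cases h : v - x ∈ W
  · rw [if_pos h]
    rw [Finset.sum_eq_single (⟨v - x, h⟩ : W)]
    · simp
    · intro u _ hu
      rw [if_neg]
      intro hv
      apply hu
      apply Subtype.ext
      show (u : Fin n → ZMod 2) = v - x
      rw [hv]; abel
    · simp
  · rw [if_neg h]
    apply Finset.sum_eq_zero
    intro u _
    rw [if_neg]
    intro hv
    apply h
    have : v - x = (u : Fin n → ZMod 2) := by rw [hv]; abel
    rw [this]; exact u.2

lemma sum_ite_mem {n : ℕ} (V : Submodule (ZMod 2) (Fin n → ZMod 2)) (g : (Fin n → ZMod 2) → ℂ) :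
    ∑ v : Fin n → ZMod 2, (if v ∈ V then g v else 0) = ∑ u : V, g (u : Fin n → ZMod 2) := by
  rw [← Finset.sum_filter]
  exact Finset.sum_subtype _ (by simp) g

lemma sum_coset_reindex {n : ℕ} (V : Submodule (ZMod 2) (Fin n → ZMod 2))
    (x : Fin n → ZMod 2) (g : (Fin n → ZMod 2) → ℂ) :
    ∑ v : Fin n → ZMod 2, (if v - x ∈ V then g (v - x) else 0) = ∑ u : V, g (u : Fin n → ZMod 2) := by
  have h := Fintype.sum_equiv (Equiv.addRight x)
    (fun w => if (w + x) - x ∈ V then g ((w + x) - x) else 0)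
    (fun v => if v - x ∈ V then g (v - x) else 0) (fun w => rfl)
  rw [← h]
  simp only [add_sub_cancel_right]
  exact sum_ite_mem V g

noncomputable def innerC {ι : Type*} [Fintype ι] (ψ φ : ι → ℂ) : ℂ :=
  ∑ i, (starRingEnd ℂ) (ψ i) * φ i

lemma outerMat_mul_outerMat {ι : Type*} [Fintype ι] (ψ₁ ψ₂ φ₁ φ₂ : ι → ℂ) :
    outerMat ψ₁ ψ₂ * outerMat φ₁ φ₂ = innerC ψ₂ φ₁ • outerMat ψ₁ φ₂ := by
  ext i j
  simp only [Matrix.mul_apply, outerMat, Matrix.smul_apply, Matrix.of_apply, innerC,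
    smul_eq_mul, Finset.sum_mul]
  exact Finset.sum_congr rfl fun m _ => by ring

lemma outerMat_conjTranspose {ι : Type*} (ψ φ : ι → ℂ) : (outerMat ψ φ)ᴴ = outerMat φ ψ := by
  ext i j
  simp [outerMat, Matrix.conjTranspose_apply, mul_comm]

lemma conj_cfac (k : ℕ) :
    (starRingEnd ℂ) ((((Real.sqrt 2 : ℝ) : ℂ) ^ k)⁻¹) = (((Real.sqrt 2 : ℝ) : ℂ) ^ k)⁻¹ := by
  rw [map_inv₀, map_pow, Complex.conj_ofReal]

lemma cfac_mul_cfac (k : ℕ) :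
    (((Real.sqrt 2 : ℝ) : ℂ) ^ k)⁻¹ * (((Real.sqrt 2 : ℝ) : ℂ) ^ k)⁻¹ = ((2 : ℂ) ^ k)⁻¹ := by
  rw [← mul_inv, ← mul_pow, ← Complex.ofReal_mul, Real.mul_self_sqrt (by norm_num)]
  norm_num

lemma innerC_cosetVec_same {n : ℕ} (V : Submodule (ZMod 2) (Fin n → ZMod 2))
    {TV TVp : Set (Fin n → ZMod 2)}
    (hTV : IsCosetReps V TV) (hTVp : IsCosetReps (dualSpace V) TVp)
    {x x' z z' : Fin n → ZMod 2} (hx : x ∈ TV) (hx' : x' ∈ TV) (hz : z ∈ TVp) (hz' : z' ∈ TVp) :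
    innerC (cosetVec V x z) (cosetVec V x' z') = if x = x' ∧ z = z' then 1 else 0 := by
  set c : ℂ := (((Real.sqrt 2 : ℝ) : ℂ) ^ (Module.finrank (ZMod 2) V))⁻¹ with hc
  by_cases hxx : x = x'
  · subst hxx
    by_cases hzz : z = z'
    · subst hzz
      rw [if_pos ⟨rfl, rfl⟩]
      unfold innerC
      have hterm : ∀ v, (starRingEnd ℂ) (cosetVec V x z v) * cosetVec V x z v =
          if v - x ∈ V then ((2 : ℂ) ^ (Module.finrank (ZMod 2) V))⁻¹ else 0 := by
        intro v
        simp only [cosetVec_apply]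
        by_cases h : v - x ∈ V
        · simp only [if_pos h]
          rw [map_mul, conj_cfac, star_signC, ← hc]
          rw [show c * signC (dotProduct z (v - x)) * (c * signC (dotProduct z (v - x)))
              = (c * c) * (signC (dotProduct z (v - x)) * signC (dotProduct z (v - x))) by ring,
            signC_mul_self, mul_one, hc, cfac_mul_cfac]
        · simp [h]
      rw [Finset.sum_congr rfl fun v _ => hterm v,
        sum_coset_reindex V x (fun _ => ((2 : ℂ) ^ (Module.finrank (ZMod 2) V))⁻¹),
        Finset.sum_const]
      have hcard : Fintype.card V = 2 ^ (Module.finrank (ZMod 2) V) := by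
        rw [Module.card_eq_pow_finrank (K := ZMod 2), ZMod.card]
      rw [Finset.card_univ, hcard, nsmul_eq_mul]
      push_cast
      rw [mul_inv_cancel₀ (pow_ne_zero _ two_ne_zero)]
    · rw [if_neg (by tauto)]
      have hnotmem : z + z' ∉ dualSpace V := by
        intro hmem
        apply hzz
        apply reps_inj hTVp hz hz'
        rw [subeq]
        exact hmem
      obtain ⟨u₀, hu₀V, hu₀⟩ : ∃ u₀ ∈ V, dotProduct u₀ (z + z') ≠ 0 := by
        by_contra h
        push_neg at h
        exact hnotmem (fun y hy => h y hy)
      have h1 : dotProduct (z + z') u₀ = 1 := by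
        rw [dotProduct_comm]
        exact (zmod2_cases _).resolve_left hu₀
      unfold innerC
      have hterm : ∀ v, (starRingEnd ℂ) (cosetVec V x z v) * cosetVec V x z' v =
          if v - x ∈ V then ((2 : ℂ) ^ (Module.finrank (ZMod 2) V))⁻¹ *
            signC (dotProduct (z + z') (v - x)) else 0 := by
        intro v
        simp only [cosetVec_apply]
        by_cases h : v - x ∈ V
        · simp only [if_pos h]
          rw [map_mul, conj_cfac, star_signC, ← hc]
          rw [show c * signC (dotProduct z (v - x)) * (c * signC (dotProduct z' (v - x)))
              = (c * c) * (signC (dotProduct z (v - x)) * signC (dotProduct z' (v - x))) by ring,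
            ← signC_add, ← add_dotProduct, hc, cfac_mul_cfac]
        · simp [h]
      rw [Finset.sum_congr rfl fun v _ => hterm v,
        sum_coset_reindex V x (fun u => ((2 : ℂ) ^ (Module.finrank (ZMod 2) V))⁻¹ *
          signC (dotProduct (z + z') u)),
        ← Finset.mul_sum, char_sum_subspace V (z + z') u₀ hu₀V h1, mul_zero]
  · rw [if_neg (by tauto)]
    unfold innerC
    apply Finset.sum_eq_zero
    intro v _
    simp only [cosetVec_apply]
    by_cases h1 : v - x ∈ V
    · by_cases h2 : v - x' ∈ V
      · exfalso
        apply hxx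
        apply reps_inj hTV hx hx'
        have he : x - x' = (v - x') - (v - x) := by abel
        rw [he]
        exact V.sub_mem h2 h1
      · simp [h2]
    · simp [h1]

lemma outer_cosetVec_mul {n : ℕ} (V : Submodule (ZMod 2) (Fin n → ZMod 2))
    {TV TVp : Set (Fin n → ZMod 2)}
    (hTV : IsCosetReps V TV) (hTVp : IsCosetReps (dualSpace V) TVp)
    {x x' z z' : Fin n → ZMod 2} (hx : x ∈ TV) (hx' : x' ∈ TV) (hz : z ∈ TVp) (hz' : z' ∈ TVp) :
    outerMat (cosetVec V x z) (cosetVec V x z) * outerMat (cosetVec V x' z') (cosetVec V x' z') =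
      if x = x' ∧ z = z' then outerMat (cosetVec V x z) (cosetVec V x z) else 0 := by
  rw [outerMat_mul_outerMat, innerC_cosetVec_same V hTV hTVp hx hx' hz hz']
  by_cases h : x = x' ∧ z = z'
  · obtain ⟨h1, h2⟩ := h
    subst h1; subst h2
    simp
  · rw [if_neg h, if_neg h, zero_smul]

/-- the signed shift matrix `X_t` -/
noncomputable def shiftMat {n : ℕ} (t : Fin n → ZMod 2) : Matrix (Fin n → ZMod 2) (Fin n → ZMod 2) ℂ :=
  Matrix.of fun v v' => if v = v' + t then 1 else 0

lemma shiftMat_conjTranspose {n : ℕ} (t : Fin n → ZMod 2) : (shiftMat t)ᴴ = shiftMat t := by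
  ext v v'
  simp only [Matrix.conjTranspose_apply, shiftMat, Matrix.of_apply]
  have h : (v' = v + t) ↔ (v = v' + t) := by
    constructor <;> intro h <;> rw [h]
    · rw [show v + t + t = v + (t + t) by abel, addself, add_zero]
    · rw [show v' + t + t = v' + (t + t) by abel, addself, add_zero]
  by_cases h2 : v = v' + t
  · rw [if_pos (h.mpr h2), if_pos h2]; simp
  · rw [if_neg (fun hh => h2 (h.mp hh)), if_neg h2]; simp

lemma shiftMat_mul_self {n : ℕ} (t : Fin n → ZMod 2) : shiftMat t * shiftMat t = 1 := by
  ext v v'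
  simp only [Matrix.mul_apply, shiftMat, Matrix.of_apply, Matrix.one_apply]
  rw [Finset.sum_eq_single (v' + t)]
  · by_cases h : v = v'
    · rw [if_pos h, if_pos rfl, if_pos]
      · simp
      · rw [h, show v' + t + t = v' + (t + t) by abel, addself, add_zero]
    · rw [if_neg h, if_pos rfl, if_neg]
      · simp
      · intro hh
        apply h
        rw [hh, show v' + t + t = v' + (t + t) by abel, addself, add_zero]
  · intro m _ hm
    rw [if_neg (fun hh : m = v' + t => hm hh)]
    simp
  · simp

/-- `Π'_z = 2^{-k} ∑_{t∈V} (-1)^{z·t} X_t` -/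
lemma projZ_eq_shift_sum {n : ℕ} (V : Submodule (ZMod 2) (Fin n → ZMod 2))
    {TV : Set (Fin n → ZMod 2)} (hTV : IsCosetReps V TV) (z : Fin n → ZMod 2) :
    ∑ x : TV, outerMat (cosetVec V (x : Fin n → ZMod 2) z) (cosetVec V (x : Fin n → ZMod 2) z) =
      ((2 : ℂ) ^ (Module.finrank (ZMod 2) V))⁻¹ •
        ∑ t : V, signC (dotProduct z (t : Fin n → ZMod 2)) • shiftMat (t : Fin n → ZMod 2) := by
  set k := Module.finrank (ZMod 2) V with hk
  ext v v'
  rw [Matrix.sum_apply, Matrix.smul_apply, Matrix.sum_apply]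
  have hterm : ∀ x : TV, outerMat (cosetVec V (x : Fin n → ZMod 2) z) (cosetVec V (x : Fin n → ZMod 2) z) v v' =
      if v - (x : Fin n → ZMod 2) ∈ V ∧ v' - (x : Fin n → ZMod 2) ∈ V then
        ((2 : ℂ) ^ k)⁻¹ * signC (dotProduct z ((v - (x : Fin n → ZMod 2)) + (v' - (x : Fin n → ZMod 2)))) else 0 := by
    intro x
    show cosetVec V (x : Fin n → ZMod 2) z v * (starRingEnd ℂ) (cosetVec V (x : Fin n → ZMod 2) z v') = _
    simp only [cosetVec_apply]
    by_cases h1 : v - (x : Fin n → ZMod 2) ∈ V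
    · by_cases h2 : v' - (x : Fin n → ZMod 2) ∈ V
      · simp only [if_pos h1, if_pos h2, if_pos (And.intro h1 h2)]
        rw [map_mul, conj_cfac, star_signC, ← hk]
        rw [show (((Real.sqrt 2 : ℝ) : ℂ) ^ k)⁻¹ * signC (dotProduct z (v - (x : Fin n → ZMod 2))) *
            ((((Real.sqrt 2 : ℝ) : ℂ) ^ k)⁻¹ * signC (dotProduct z (v' - (x : Fin n → ZMod 2)))) =
            ((((Real.sqrt 2 : ℝ) : ℂ) ^ k)⁻¹ * (((Real.sqrt 2 : ℝ) : ℂ) ^ k)⁻¹) *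
            (signC (dotProduct z (v - (x : Fin n → ZMod 2))) * signC (dotProduct z (v' - (x : Fin n → ZMod 2)))) by ring]
        rw [cfac_mul_cfac, ← signC_add, ← dotProduct_add]
      · simp [h2]
    · simp [h1]
  rw [Finset.sum_congr rfl fun x _ => hterm x]
  have hshift : ∀ t : V, (signC (dotProduct z (t : Fin n → ZMod 2)) • shiftMat (t : Fin n → ZMod 2)) v v' =
      if v = v' + (t : Fin n → ZMod 2) then signC (dotProduct z (t : Fin n → ZMod 2)) else 0 := by
    intro t
    rw [Matrix.smul_apply]
    simp only [shiftMat, Matrix.of_apply, smul_eq_mul]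
    by_cases h : v = v' + (t : Fin n → ZMod 2) <;> simp [h]
  rw [Finset.sum_congr rfl fun t _ => hshift t]
  by_cases hv : v - v' ∈ V
  · obtain ⟨x₀, hx₀, huniq⟩ := hTV v
    obtain ⟨hx₀T, hx₀V⟩ := hx₀
    have hsum : (v - x₀) + (v' - x₀) = v - v' := by
      rw [subeq v x₀, subeq v' x₀, subeq v v',
        show v + x₀ + (v' + x₀) = v + v' + (x₀ + x₀) by abel, addself, add_zero]
    rw [Finset.sum_eq_single (⟨x₀, hx₀T⟩ : TV)]
    · have hv' : v' - x₀ ∈ V := by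
        have he : v' - x₀ = (v - x₀) - (v - v') := by abel
        rw [he]
        exact V.sub_mem hx₀V hv
      rw [if_pos ⟨hx₀V, hv'⟩, hsum]
      rw [Finset.sum_eq_single (⟨v - v', hv⟩ : V)]
      · rw [if_pos (show v = v' + (v - v') by abel)]
        rw [smul_eq_mul]
      · intro t _ ht
        rw [if_neg]
        intro hh
        apply ht
        apply Subtype.ext
        show (t : Fin n → ZMod 2) = v - v'
        rw [hh]; abel
      · simp
    · intro x _ hx
      rw [if_neg]
      rintro ⟨hxa, hxb⟩
      apply hx
      apply Subtype.ext
      show (x : Fin n → ZMod 2) = x₀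
      exact huniq (x : Fin n → ZMod 2) ⟨x.2, hxa⟩
    · simp
  · rw [Finset.sum_eq_zero, Finset.sum_eq_zero]
    · simp
    · intro t _
      rw [if_neg]
      intro hh
      apply hv
      rw [show v - v' = (t : Fin n → ZMod 2) by rw [hh]; abel]
      exact t.2
    · intro x _
      rw [if_neg]
      rintro ⟨hxa, hxb⟩
      apply hv
      rw [show v - v' = (v - (x : Fin n → ZMod 2)) - (v' - (x : Fin n → ZMod 2)) by abel]
      exact V.sub_mem hxa hxb

lemma finrank_add_finrank_dualSpace {n : ℕ} (W : Submodule (ZMod 2) (Fin n → ZMod 2)) :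
    Module.finrank (ZMod 2) W + Module.finrank (ZMod 2) (dualSpace W) = n := by
  let L : (Fin n → ZMod 2) →ₗ[ZMod 2] Module.Dual (ZMod 2) W :=
    { toFun := fun y =>
        { toFun := fun xw => dotProduct (xw : Fin n → ZMod 2) y
          map_add' := by intro a b; simp [add_dotProduct]
          map_smul' := by intro c a; simp [smul_dotProduct] }
      map_add' := by intro a b; ext xw; simp [dotProduct_add]
      map_smul' := by intro c a; ext xw; simp [dotProduct_smul] }
  have hker : LinearMap.ker L = dualSpace W := by
    ext y
    constructor
    · intro hy x hx
      have h1 : L y = 0 := hy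
      have h2 : (L y) ⟨x, hx⟩ = 0 := by rw [h1]; rfl
      exact h2
    · intro hy
      have : L y = 0 := by
        ext xw
        exact hy (xw : Fin n → ZMod 2) xw.2
      exact this
  have hsurj : Function.Surjective L := by
    intro f
    obtain ⟨g, hg⟩ := Subspace.dualRestrict_surjective (W := W) f
    refine ⟨fun i => g (Pi.single i 1), ?_⟩
    ext xw
    have h1 : (L fun i => g (Pi.single i 1)) xw =
        dotProduct (xw : Fin n → ZMod 2) (fun i => g (Pi.single i 1)) := rfl
    rw [h1]
    have h2 : g (xw : Fin n → ZMod 2) = ∑ i, (xw : Fin n → ZMod 2) i • g (fun j => if i = j then 1 else 0) :=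
      LinearMap.pi_apply_eq_sum_univ g (xw : Fin n → ZMod 2)
    have h3 : dotProduct (xw : Fin n → ZMod 2) (fun i => g (Pi.single i 1)) =
        g (xw : Fin n → ZMod 2) := by
      rw [h2, dotProduct]
      apply Finset.sum_congr rfl
      intro i _
      rw [smul_eq_mul]
      congr 1
      congr 1
      funext j
      rw [Pi.single_apply]
      exact if_congr eq_comm rfl rfl
    rw [h3, ← Submodule.dualRestrict_apply, hg]
  have hrn := LinearMap.finrank_range_add_finrank_ker L
  rw [hker, LinearMap.range_eq_top.mpr hsurj, finrank_top, Subspace.dual_finrank_eq,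
    Module.finrank_fintype_fun_eq_card, Fintype.card_fin] at hrn
  exact hrn

lemma card_reps_mul {n : ℕ} (D : Submodule (ZMod 2) (Fin n → ZMod 2))
    (T : Set (Fin n → ZMod 2)) (hT : IsCosetReps D T) :
    Fintype.card T * Fintype.card D = 2 ^ n := by
  have e : (Fin n → ZMod 2) ≃ T × D :=
    { toFun := fun v => (⟨(hT v).choose, (hT v).choose_spec.1.1⟩,
        ⟨v - (hT v).choose, (hT v).choose_spec.1.2⟩)
      invFun := fun p => (p.1 : Fin n → ZMod 2) + (p.2 : Fin n → ZMod 2)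
      left_inv := fun v => by
        show (hT v).choose + (v - (hT v).choose) = v
        abel
      right_inv := fun p => by
        obtain ⟨⟨t, ht⟩, ⟨d, hd⟩⟩ := p
        have h1 : t = (hT (t + d)).choose :=
          (hT (t + d)).choose_spec.2 t ⟨ht, by rw [add_sub_cancel_left]; exact hd⟩
        refine Prod.ext (Subtype.ext ?_) (Subtype.ext ?_)
        · exact h1.symm
        · show (t + d) - (hT (t + d)).choose = d
          rw [← h1, add_sub_cancel_left] }
  have hc := Fintype.card_congr e
  rw [Fintype.card_prod] at hc
  rw [← hc]
  rw [Fintype.card_fun, ZMod.card, Fintype.card_fin]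

lemma card_dual_reps {n : ℕ} (W : Submodule (ZMod 2) (Fin n → ZMod 2))
    (T : Set (Fin n → ZMod 2)) (hT : IsCosetReps (dualSpace W) T) :
    Fintype.card T = 2 ^ (Module.finrank (ZMod 2) W) := by
  have h1 := card_reps_mul (dualSpace W) T hT
  have h2 : Fintype.card (dualSpace W) = 2 ^ (Module.finrank (ZMod 2) (dualSpace W)) := by
    rw [Module.card_eq_pow_finrank (K := ZMod 2), ZMod.card]
  have h3 := finrank_add_finrank_dualSpace W
  rw [h2] at h1
  have h4 : (2 : ℕ) ^ n = 2 ^ (Module.finrank (ZMod 2) W) * 2 ^ (Module.finrank (ZMod 2) (dualSpace W)) := by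
    rw [← pow_add, h3]
  rw [h4] at h1
  exact Nat.eq_of_mul_eq_mul_right (by positivity) h1

/-- `Π_x^W = ∑_{z'∈CS(W^⊥)} |W_{x,z'}⟩⟨W_{x,z'}|` is the diagonal projection onto the coset `x+W` -/
lemma projX_eq_diag {n : ℕ} (W : Submodule (ZMod 2) (Fin n → ZMod 2))
    {TWp : Set (Fin n → ZMod 2)} (hTWp : IsCosetReps (dualSpace W) TWp) (x : Fin n → ZMod 2) :
    ∑ z : TWp, outerMat (cosetVec W x (z : Fin n → ZMod 2)) (cosetVec W x (z : Fin n → ZMod 2)) =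
      Matrix.diagonal (fun v => if v - x ∈ W then (1 : ℂ) else 0) := by
  set k := Module.finrank (ZMod 2) W with hk
  ext v v'
  rw [Matrix.sum_apply]
  have hterm : ∀ z : TWp, outerMat (cosetVec W x (z : Fin n → ZMod 2)) (cosetVec W x (z : Fin n → ZMod 2)) v v' =
      if v - x ∈ W ∧ v' - x ∈ W then
        ((2 : ℂ) ^ k)⁻¹ * signC (dotProduct (z : Fin n → ZMod 2) ((v - x) + (v' - x))) else 0 := by
    intro z
    show cosetVec W x (z : Fin n → ZMod 2) v * (starRingEnd ℂ) (cosetVec W x (z : Fin n → ZMod 2) v') = _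
    simp only [cosetVec_apply]
    by_cases h1 : v - x ∈ W
    · by_cases h2 : v' - x ∈ W
      · simp only [if_pos h1, if_pos h2, if_pos (And.intro h1 h2)]
        rw [map_mul, conj_cfac, star_signC, ← hk]
        rw [show (((Real.sqrt 2 : ℝ) : ℂ) ^ k)⁻¹ * signC (dotProduct (z : Fin n → ZMod 2) (v - x)) *
            ((((Real.sqrt 2 : ℝ) : ℂ) ^ k)⁻¹ * signC (dotProduct (z : Fin n → ZMod 2) (v' - x))) =
            ((((Real.sqrt 2 : ℝ) : ℂ) ^ k)⁻¹ * (((Real.sqrt 2 : ℝ) : ℂ) ^ k)⁻¹) *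
            (signC (dotProduct (z : Fin n → ZMod 2) (v - x)) * signC (dotProduct (z : Fin n → ZMod 2) (v' - x))) by ring]
        rw [cfac_mul_cfac, ← signC_add, ← dotProduct_add]
      · simp [h2]
    · simp [h1]
  rw [Finset.sum_congr rfl fun z _ => hterm z]
  by_cases h1 : v - x ∈ W
  · by_cases hvv : v = v'
    · subst hvv
      simp only [if_pos (And.intro h1 h1), Matrix.diagonal_apply_eq, if_pos h1]
      have h0 : (v - x) + (v - x) = 0 := addself _
      rw [h0]
      simp only [dotProduct_zero, signC_zero, mul_one]
      rw [Finset.sum_const, Finset.card_univ, card_dual_reps W TWp hTWp, ← hk, nsmul_eq_mul]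
      push_cast
      rw [mul_inv_cancel₀ (pow_ne_zero _ two_ne_zero)]
    · rw [Matrix.diagonal_apply_ne _ hvv]
      by_cases h2 : v' - x ∈ W
      · simp only [if_pos (And.intro h1 h2)]
        set w := (v - x) + (v' - x) with hw
        have hwW : w ∈ W := W.add_mem h1 h2
        have hw0 : w ≠ 0 := by
          intro hh
          apply hvv
          have : v - v' = 0 := by
            rw [← hh, hw, subeq v x, subeq v' x, subeq v v',
              show v + x + (v' + x) = v + v' + (x + x) by abel, addself, add_zero]
          rw [sub_eq_zero] at this
          exact this
        rw [← Finset.mul_sum, char_sum_reps W TWp hTWp w hwW hw0, mul_zero]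
      · simp [h2]
  · rw [Finset.sum_eq_zero fun z _ => by simp [h1]]
    by_cases hvv : v = v'
    · subst hvv
      rw [Matrix.diagonal_apply_eq, if_neg h1]
    · rw [Matrix.diagonal_apply_ne _ hvv]

section NormLemmas

variable {ι : Type*} [Fintype ι] [DecidableEq ι]

lemma norm_one_le : ‖(1 : Matrix ι ι ℂ)‖ ≤ 1 := by
  have h : ‖(1 : Matrix ι ι ℂ)‖ * ‖(1 : Matrix ι ι ℂ)‖ = ‖(1 : Matrix ι ι ℂ)‖ := by
    conv_rhs => rw [show (1 : Matrix ι ι ℂ) = (1 : Matrix ι ι ℂ)ᴴ * 1 by simp]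
    rw [Matrix.l2_opNorm_conjTranspose_mul_self]
  nlinarith [norm_nonneg (1 : Matrix ι ι ℂ)]

lemma norm_le_one_of_herm_invol (A : Matrix ι ι ℂ) (h1 : Aᴴ = A) (h2 : A * A = 1) :
    ‖A‖ ≤ 1 := by
  have h : ‖A‖ * ‖A‖ = ‖(1 : Matrix ι ι ℂ)‖ := by
    rw [← Matrix.l2_opNorm_conjTranspose_mul_self A, h1, h2]
  nlinarith [norm_nonneg A, norm_one_le (ι := ι)]

lemma norm_le_one_of_herm_idem (A : Matrix ι ι ℂ) (h1 : Aᴴ = A) (h2 : A * A = A) :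
    ‖A‖ ≤ 1 := by
  have h : ‖A‖ * ‖A‖ = ‖A‖ := by
    rw [← Matrix.l2_opNorm_conjTranspose_mul_self A, h1, h2]
  nlinarith [norm_nonneg A]

end NormLemmas

section KronLemmas

variable {α β : Type*}

lemma kron_conjTranspose [Fintype α] [Fintype β] (A : Matrix α α ℂ) (B : Matrix β β ℂ) :
    (A ⊗ₖ B)ᴴ = Aᴴ ⊗ₖ Bᴴ := by
  ext i j
  simp [Matrix.conjTranspose_apply, Matrix.kroneckerMap_apply]

lemma sum_kron {γ : Type*} (s : Finset γ) (f : γ → Matrix α α ℂ) (B : Matrix β β ℂ) :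
    (∑ i ∈ s, f i) ⊗ₖ B = ∑ i ∈ s, (f i) ⊗ₖ B := by
  ext p q
  simp [Matrix.kroneckerMap_apply, Matrix.sum_apply, Finset.sum_mul]

lemma kron_sum {γ : Type*} (s : Finset γ) (A : Matrix α α ℂ) (f : γ → Matrix β β ℂ) :
    A ⊗ₖ (∑ i ∈ s, f i) = ∑ i ∈ s, A ⊗ₖ (f i) := by
  ext p q
  simp [Matrix.kroneckerMap_apply, Matrix.sum_apply, Finset.mul_sum]

end KronLemmas

/-- the diagonal projection onto the coset `x + W` -/
noncomputable def Dmat {n : ℕ} (W : Submodule (ZMod 2) (Fin n → ZMod 2)) (x : Fin n → ZMod 2) :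
    Matrix (Fin n → ZMod 2) (Fin n → ZMod 2) ℂ :=
  Matrix.diagonal (fun v => if v - x ∈ W then (1 : ℂ) else 0)

lemma Dmat_conjTranspose {n : ℕ} (W : Submodule (ZMod 2) (Fin n → ZMod 2)) (x : Fin n → ZMod 2) :
    (Dmat W x)ᴴ = Dmat W x := by
  ext v v'
  rw [Matrix.conjTranspose_apply, Dmat]
  by_cases h : v = v'
  · subst h
    simp only [Matrix.diagonal_apply_eq]
    by_cases h2 : v - x ∈ W <;> simp [h2]
  · rw [Matrix.diagonal_apply_ne _ (Ne.symm h), Matrix.diagonal_apply_ne _ h]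
    simp

lemma Dmat_mul_Dmat {n : ℕ} (W : Submodule (ZMod 2) (Fin n → ZMod 2)) (x : Fin n → ZMod 2) :
    Dmat W x * Dmat W x = Dmat W x := by
  rw [Dmat, Matrix.diagonal_mul_diagonal]
  apply congrArg
  funext v
  by_cases h : v - x ∈ W <;> simp [h]

lemma Dmat_shift_Dmat {n : ℕ} (W : Submodule (ZMod 2) (Fin n → ZMod 2)) (x t : Fin n → ZMod 2) :
    Dmat W x * shiftMat t * Dmat W x =
      if t ∈ W then shiftMat t * Dmat W x else 0 := by
  by_cases ht : t ∈ W
  · rw [if_pos ht]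
    ext v v'
    simp only [Dmat, Matrix.mul_diagonal, Matrix.diagonal_mul, shiftMat, Matrix.of_apply]
    by_cases hvv : v = v' + t
    · by_cases h2 : v' - x ∈ W
      · have h3 : v' + t - x ∈ W := by
          rw [show v' + t - x = (v' - x) + t by abel]
          exact W.add_mem h2 ht
        simp [hvv, h2, h3]
      · simp [h2]
    · simp [hvv]
  · rw [if_neg ht]
    ext v v'
    simp only [Dmat, Matrix.mul_diagonal, Matrix.diagonal_mul, shiftMat, Matrix.of_apply,
      Matrix.zero_apply]
    by_cases hvv : v = v' + t
    · by_cases h2 : v' - x ∈ W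
      · by_cases h3 : v - x ∈ W
        · exfalso
          apply ht
          have he : t = (v - x) - (v' - x) := by rw [hvv]; abel
          rw [he]
          exact W.sub_mem h3 h2
        · simp [h3]
      · simp [h2]
    · simp [hvv]

end Stmt12

set_option maxHeartbeats 2000000 in
open Stmt12 Matrix in
/-- For `V, W ∈ Gr₂(n,k)`, a PVM `{C_z^V}_{z ∈ CS(V^⊥)}` on `H_C` and a PVM
`{B_x^W}_{x ∈ CS(W)}` on `H_B`, the operators
`P^V = ∑_{x,z} |V_{x,z}⟩⟨V_{x,z}| ⊗ Id_B ⊗ C_z^V` and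
`Q^W = ∑_{x,z} |W_{x,z}⟩⟨W_{x,z}| ⊗ B_x^W ⊗ Id_C`
on `(ℂ²)^{⊗n} ⊗ H_B ⊗ H_C` satisfy `‖P^V Q^W‖ ≤ √(2^{dim(V ∩ W) - k})`. -/
theorem norm_PV_mul_QW_le {n k : ℕ} {ιB ιC : Type*} [Fintype ιB] [Fintype ιC]
    (V W : Submodule (ZMod 2) (Fin n → ZMod 2))
    (hV : Module.finrank (ZMod 2) V = k) (hW : Module.finrank (ZMod 2) W = k)
    (TV TW TVp TWp : Set (Fin n → ZMod 2))
    (hTV : IsCosetReps V TV) (hTW : IsCosetReps W TW)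
    (hTVp : IsCosetReps (dualSpace V) TVp) (hTWp : IsCosetReps (dualSpace W) TWp)
    (C : TVp → Matrix ιC ιC ℂ) (hC : IsPVM C)
    (B : TW → Matrix ιB ιB ℂ) (hB : IsPVM B) :
    ‖(∑ x : TV, ∑ z : TVp,
          (outerMat (cosetVec V (x : Fin n → ZMod 2) (z : Fin n → ZMod 2))
            (cosetVec V (x : Fin n → ZMod 2) (z : Fin n → ZMod 2))) ⊗ₖ
            ((1 : Matrix ιB ιB ℂ) ⊗ₖ C z)) *
        (∑ x : TW, ∑ z : TWp,
          (outerMat (cosetVec W (x : Fin n → ZMod 2) (z : Fin n → ZMod 2))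
            (cosetVec W (x : Fin n → ZMod 2) (z : Fin n → ZMod 2))) ⊗ₖ
            (B x ⊗ₖ (1 : Matrix ιC ιC ℂ)))‖ ≤
      Real.sqrt ((2 : ℝ) ^ ((Module.finrank (ZMod 2) ↥(V ⊓ W) : ℤ) - (k : ℤ))) := by
  classical
  set P :=
    (∑ x : TV, ∑ z : TVp,
          (outerMat (cosetVec V (x : Fin n → ZMod 2) (z : Fin n → ZMod 2))
            (cosetVec V (x : Fin n → ZMod 2) (z : Fin n → ZMod 2))) ⊗ₖ
            ((1 : Matrix ιB ιB ℂ) ⊗ₖ C z)) with hP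
  set Q :=
    (∑ x : TW, ∑ z : TWp,
          (outerMat (cosetVec W (x : Fin n → ZMod 2) (z : Fin n → ZMod 2))
            (cosetVec W (x : Fin n → ZMod 2) (z : Fin n → ZMod 2))) ⊗ₖ
            (B x ⊗ₖ (1 : Matrix ιC ιC ℂ))) with hQ
  set d := Module.finrank (ZMod 2) ↥(V ⊓ W) with hd
  -- Hermiticity of P and Q
  have hPherm : Pᴴ = P := by
    rw [hP, Matrix.conjTranspose_sum]
    refine Finset.sum_congr rfl fun x _ => ?_
    rw [Matrix.conjTranspose_sum]
    refine Finset.sum_congr rfl fun z _ => ?_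
    rw [kron_conjTranspose, kron_conjTranspose, Matrix.conjTranspose_one,
      outerMat_conjTranspose, (hC.1 z).eq]
  have hQherm : Qᴴ = Q := by
    rw [hQ, Matrix.conjTranspose_sum]
    refine Finset.sum_congr rfl fun x _ => ?_
    rw [Matrix.conjTranspose_sum]
    refine Finset.sum_congr rfl fun z _ => ?_
    rw [kron_conjTranspose, kron_conjTranspose, Matrix.conjTranspose_one,
      outerMat_conjTranspose, (hB.1 x).eq]
  -- P is idempotent
  have hPP : P * P = P := by
    have hPprod : P = ∑ p : (↥TV × ↥TVp),
        (outerMat (cosetVec V (p.1 : Fin n → ZMod 2) (p.2 : Fin n → ZMod 2))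
          (cosetVec V (p.1 : Fin n → ZMod 2) (p.2 : Fin n → ZMod 2))) ⊗ₖ
          ((1 : Matrix ιB ιB ℂ) ⊗ₖ C p.2) := by
      rw [hP, Fintype.sum_prod_type]
    rw [hPprod, Finset.sum_mul_sum]
    have hFmul : ∀ p q : ↥TV × ↥TVp,
        ((outerMat (cosetVec V (p.1 : Fin n → ZMod 2) (p.2 : Fin n → ZMod 2))
          (cosetVec V (p.1 : Fin n → ZMod 2) (p.2 : Fin n → ZMod 2))) ⊗ₖ
          ((1 : Matrix ιB ιB ℂ) ⊗ₖ C p.2)) *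
        ((outerMat (cosetVec V (q.1 : Fin n → ZMod 2) (q.2 : Fin n → ZMod 2))
          (cosetVec V (q.1 : Fin n → ZMod 2) (q.2 : Fin n → ZMod 2))) ⊗ₖ
          ((1 : Matrix ιB ιB ℂ) ⊗ₖ C q.2)) =
        if p = q then (outerMat (cosetVec V (p.1 : Fin n → ZMod 2) (p.2 : Fin n → ZMod 2))
          (cosetVec V (p.1 : Fin n → ZMod 2) (p.2 : Fin n → ZMod 2))) ⊗ₖ
          ((1 : Matrix ιB ιB ℂ) ⊗ₖ C p.2) else 0 := by
      intro p q
      rw [← Matrix.mul_kronecker_mul, ← Matrix.mul_kronecker_mul, Matrix.one_mul]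
      rw [outer_cosetVec_mul V hTV hTVp p.1.2 q.1.2 p.2.2 q.2.2]
      by_cases hpq : p = q
      · subst hpq
        rw [if_pos ⟨rfl, rfl⟩, if_pos rfl, hC.2.1 p.2]
      · by_cases hz : p.2 = q.2
        · have hx : ¬((p.1 : Fin n → ZMod 2) = (q.1 : Fin n → ZMod 2) ∧
              (p.2 : Fin n → ZMod 2) = (q.2 : Fin n → ZMod 2)) := by
            rintro ⟨h1, -⟩
            exact hpq (Prod.ext (Subtype.ext h1) hz)
          rw [if_neg hx, if_neg hpq, Matrix.zero_kronecker]
        · rw [hC.2.2.1 p.2 q.2 hz, Matrix.kronecker_zero, Matrix.kronecker_zero, if_neg hpq]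
    refine Finset.sum_congr rfl fun p _ => ?_
    rw [Finset.sum_congr rfl fun q _ => hFmul p q, Finset.sum_ite_eq, if_pos (Finset.mem_univ p)]
  -- rearranged forms
  have hQr : Q = ∑ x : TW, Dmat W (x : Fin n → ZMod 2) ⊗ₖ (B x ⊗ₖ (1 : Matrix ιC ιC ℂ)) := by
    rw [hQ]
    refine Finset.sum_congr rfl fun x _ => ?_
    rw [← sum_kron, projX_eq_diag W hTWp (x : Fin n → ZMod 2)]
    rfl
  have hPr : P = ∑ z : TVp,
      (∑ x : TV, outerMat (cosetVec V (x : Fin n → ZMod 2) (z : Fin n → ZMod 2))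
        (cosetVec V (x : Fin n → ZMod 2) (z : Fin n → ZMod 2))) ⊗ₖ
        ((1 : Matrix ιB ιB ℂ) ⊗ₖ C z) := by
    rw [hP, Finset.sum_comm]
    refine Finset.sum_congr rfl fun z _ => ?_
    rw [← sum_kron]
  -- Q is idempotent
  have hQQ : Q * Q = Q := by
    rw [hQr, Finset.sum_mul_sum]
    refine Finset.sum_congr rfl fun x _ => ?_
    rw [Finset.sum_eq_single x]
    · rw [← Matrix.mul_kronecker_mul, ← Matrix.mul_kronecker_mul, Dmat_mul_Dmat,
        hB.2.1 x, Matrix.one_mul]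
    · intro x' _ hxx
      rw [← Matrix.mul_kronecker_mul, ← Matrix.mul_kronecker_mul,
        hB.2.2.1 x x' (Ne.symm hxx), Matrix.zero_kronecker, Matrix.kronecker_zero]
    · intro h
      exact absurd (Finset.mem_univ x) h
  -- product QPQ
  have hQP : Q * P = ∑ x : TW, ∑ z : TVp,
      (Dmat W (x : Fin n → ZMod 2) *
        (∑ x' : TV, outerMat (cosetVec V (x' : Fin n → ZMod 2) (z : Fin n → ZMod 2))
          (cosetVec V (x' : Fin n → ZMod 2) (z : Fin n → ZMod 2)))) ⊗ₖ
        (B x ⊗ₖ C z) := by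
    rw [hQr, hPr, Finset.sum_mul_sum]
    refine Finset.sum_congr rfl fun x _ => Finset.sum_congr rfl fun z _ => ?_
    rw [← Matrix.mul_kronecker_mul, ← Matrix.mul_kronecker_mul, Matrix.mul_one, Matrix.one_mul]
  have hQPQ1 : Q * P * Q = ∑ x : TW, ∑ z : TVp,
      (Dmat W (x : Fin n → ZMod 2) *
        (∑ x' : TV, outerMat (cosetVec V (x' : Fin n → ZMod 2) (z : Fin n → ZMod 2))
          (cosetVec V (x' : Fin n → ZMod 2) (z : Fin n → ZMod 2))) *
        Dmat W (x : Fin n → ZMod 2)) ⊗ₖ (B x ⊗ₖ C z) := by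
    rw [hQP, hQr, Finset.sum_mul]
    refine Finset.sum_congr rfl fun x _ => ?_
    rw [Finset.sum_mul]
    refine Finset.sum_congr rfl fun z _ => ?_
    rw [Finset.mul_sum, Finset.sum_eq_single x]
    · rw [← Matrix.mul_kronecker_mul, ← Matrix.mul_kronecker_mul, hB.2.1 x, Matrix.mul_one]
    · intro x' _ hxx
      rw [← Matrix.mul_kronecker_mul, ← Matrix.mul_kronecker_mul,
        hB.2.2.1 x x' (Ne.symm hxx), Matrix.zero_kronecker, Matrix.kronecker_zero]
    · intro h
      exact absurd (Finset.mem_univ x) h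
  -- sandwich of the V-projector by the diagonal W-coset projectors
  have hDPD : ∀ (x : TW) (z : TVp),
      Dmat W (x : Fin n → ZMod 2) *
        (∑ x' : TV, outerMat (cosetVec V (x' : Fin n → ZMod 2) (z : Fin n → ZMod 2))
          (cosetVec V (x' : Fin n → ZMod 2) (z : Fin n → ZMod 2))) *
        Dmat W (x : Fin n → ZMod 2) =
      ((2 : ℂ) ^ k)⁻¹ • ∑ t : V,
        signC (dotProduct (z : Fin n → ZMod 2) (t : Fin n → ZMod 2)) •
          (if (t : Fin n → ZMod 2) ∈ W then
            shiftMat (t : Fin n → ZMod 2) * Dmat W (x : Fin n → ZMod 2) else 0) := by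
    intro x z
    have hPiz := projZ_eq_shift_sum V hTV (z : Fin n → ZMod 2)
    rw [hV] at hPiz
    rw [hPiz, Matrix.mul_smul, Matrix.smul_mul]
    congr 1
    rw [Finset.mul_sum, Finset.sum_mul]
    refine Finset.sum_congr rfl fun t _ => ?_
    rw [Matrix.mul_smul, Matrix.smul_mul]
    congr 1
    exact Dmat_shift_Dmat W (x : Fin n → ZMod 2) (t : Fin n → ZMod 2)
  -- the sign-twisted C operators
  set G := fun t : ↥V => ∑ z : TVp,
    signC (dotProduct (z : Fin n → ZMod 2) (t : Fin n → ZMod 2)) • C z with hG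
  have hMt : ∀ t : ↥V,
      (shiftMat (t : Fin n → ZMod 2) ⊗ₖ ((1 : Matrix ιB ιB ℂ) ⊗ₖ (1 : Matrix ιC ιC ℂ))) * Q *
        ((1 : Matrix (Fin n → ZMod 2) (Fin n → ZMod 2) ℂ) ⊗ₖ ((1 : Matrix ιB ιB ℂ) ⊗ₖ G t)) =
      ∑ x : TW, ∑ z : TVp,
        signC (dotProduct (z : Fin n → ZMod 2) (t : Fin n → ZMod 2)) •
          ((shiftMat (t : Fin n → ZMod 2) * Dmat W (x : Fin n → ZMod 2)) ⊗ₖ (B x ⊗ₖ C z)) := by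
    intro t
    rw [hQr, Finset.mul_sum, Finset.sum_mul]
    refine Finset.sum_congr rfl fun x _ => ?_
    rw [← Matrix.mul_kronecker_mul, ← Matrix.mul_kronecker_mul]
    rw [← Matrix.mul_kronecker_mul, ← Matrix.mul_kronecker_mul]
    simp only [Matrix.one_mul, Matrix.mul_one]
    have h1 : B x ⊗ₖ G t = ∑ z : TVp,
        signC (dotProduct (z : Fin n → ZMod 2) (t : Fin n → ZMod 2)) • (B x ⊗ₖ C z) := by
      rw [hG]
      rw [kron_sum]
      exact Finset.sum_congr rfl fun z _ => Matrix.kronecker_smul _ _ _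
    rw [h1, kron_sum]
    exact Finset.sum_congr rfl fun z _ => Matrix.kronecker_smul _ _ _
  -- main structural identity
  have hQPQ2 : Q * P * Q = ((2 : ℂ) ^ k)⁻¹ • ∑ t : ↥V,
      (if (t : Fin n → ZMod 2) ∈ W then
        (shiftMat (t : Fin n → ZMod 2) ⊗ₖ ((1 : Matrix ιB ιB ℂ) ⊗ₖ (1 : Matrix ιC ιC ℂ))) * Q *
          ((1 : Matrix (Fin n → ZMod 2) (Fin n → ZMod 2) ℂ) ⊗ₖ ((1 : Matrix ιB ιB ℂ) ⊗ₖ G t))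
      else 0) := by
    rw [hQPQ1]
    have e1 : ∀ (x : TW) (z : TVp),
        (Dmat W (x : Fin n → ZMod 2) *
          (∑ x' : TV, outerMat (cosetVec V (x' : Fin n → ZMod 2) (z : Fin n → ZMod 2))
            (cosetVec V (x' : Fin n → ZMod 2) (z : Fin n → ZMod 2))) *
          Dmat W (x : Fin n → ZMod 2)) ⊗ₖ (B x ⊗ₖ C z) =
        ((2 : ℂ) ^ k)⁻¹ • ∑ t : ↥V,
          (if (t : Fin n → ZMod 2) ∈ W then
            signC (dotProduct (z : Fin n → ZMod 2) (t : Fin n → ZMod 2)) •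
              ((shiftMat (t : Fin n → ZMod 2) * Dmat W (x : Fin n → ZMod 2)) ⊗ₖ (B x ⊗ₖ C z))
          else 0) := by
      intro x z
      rw [hDPD x z, Matrix.smul_kronecker, sum_kron]
      congr 1
      refine Finset.sum_congr rfl fun t _ => ?_
      rw [Matrix.smul_kronecker]
      by_cases h : (t : Fin n → ZMod 2) ∈ W
      · rw [if_pos h, if_pos h]
      · rw [if_neg h, if_neg h, Matrix.zero_kronecker, smul_zero]
    rw [Finset.sum_congr rfl fun x _ => Finset.sum_congr rfl fun z _ => e1 x z]
    simp only [← Finset.smul_sum]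
    refine congrArg (fun M => ((2 : ℂ) ^ k)⁻¹ • M) ?_
    rw [Finset.sum_congr rfl fun x _ => Finset.sum_comm, Finset.sum_comm]
    refine Finset.sum_congr rfl fun t _ => ?_
    by_cases h : (t : Fin n → ZMod 2) ∈ W
    · simp only [if_pos h]
      exact (hMt t).symm
    · simp only [if_neg h, Finset.sum_const_zero]
  -- norm bounds for the three factors
  have hQnorm : ‖Q‖ ≤ 1 := norm_le_one_of_herm_idem Q hQherm hQQ
  have hGG : ∀ t : ↥V, G t * G t = 1 := by
    intro t
    rw [hG]
    simp only
    rw [Finset.sum_mul_sum]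
    refine Eq.trans (Finset.sum_congr rfl fun z _ => ?_) hC.2.2.2
    rw [Finset.sum_eq_single z]
    · rw [Matrix.smul_mul, Matrix.mul_smul, smul_smul, signC_mul_self, hC.2.1 z, one_smul]
    · intro z' _ hzz
      rw [Matrix.smul_mul, Matrix.mul_smul, smul_smul, hC.2.2.1 z z' (Ne.symm hzz), smul_zero]
    · intro h
      exact absurd (Finset.mem_univ z) h
  have hGherm : ∀ t : ↥V, (G t)ᴴ = G t := by
    intro t
    rw [hG]
    simp only
    rw [Matrix.conjTranspose_sum]
    refine Finset.sum_congr rfl fun z _ => ?_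
    rw [Matrix.conjTranspose_smul, (hC.1 z).eq]
    congr 1
    exact star_signC _
  have hStnorm : ∀ t : ↥V,
      ‖shiftMat (t : Fin n → ZMod 2) ⊗ₖ ((1 : Matrix ιB ιB ℂ) ⊗ₖ (1 : Matrix ιC ιC ℂ))‖ ≤ 1 := by
    intro t
    apply norm_le_one_of_herm_invol
    · rw [kron_conjTranspose, kron_conjTranspose, shiftMat_conjTranspose,
        Matrix.conjTranspose_one, Matrix.conjTranspose_one]
    · rw [← Matrix.mul_kronecker_mul, ← Matrix.mul_kronecker_mul, shiftMat_mul_self]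
      simp only [Matrix.one_mul]
      rw [Matrix.one_kronecker_one, Matrix.one_kronecker_one]
  have hEtnorm : ∀ t : ↥V,
      ‖(1 : Matrix (Fin n → ZMod 2) (Fin n → ZMod 2) ℂ) ⊗ₖ ((1 : Matrix ιB ιB ℂ) ⊗ₖ G t)‖ ≤ 1 := by
    intro t
    apply norm_le_one_of_herm_invol
    · rw [kron_conjTranspose, kron_conjTranspose, Matrix.conjTranspose_one,
        Matrix.conjTranspose_one, hGherm t]
    · rw [← Matrix.mul_kronecker_mul, ← Matrix.mul_kronecker_mul, hGG t]
      simp only [Matrix.one_mul]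
      rw [Matrix.one_kronecker_one, Matrix.one_kronecker_one]
  have hterm_norm : ∀ t : ↥V,
      ‖(if (t : Fin n → ZMod 2) ∈ W then
        (shiftMat (t : Fin n → ZMod 2) ⊗ₖ ((1 : Matrix ιB ιB ℂ) ⊗ₖ (1 : Matrix ιC ιC ℂ))) * Q *
          ((1 : Matrix (Fin n → ZMod 2) (Fin n → ZMod 2) ℂ) ⊗ₖ ((1 : Matrix ιB ιB ℂ) ⊗ₖ G t))
      else 0)‖ ≤ (if (t : Fin n → ZMod 2) ∈ W then (1 : ℝ) else 0) := by
    intro t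
    by_cases h : (t : Fin n → ZMod 2) ∈ W
    · rw [if_pos h, if_pos h]
      have h1 := Matrix.l2_opNorm_mul
        ((shiftMat (t : Fin n → ZMod 2) ⊗ₖ ((1 : Matrix ιB ιB ℂ) ⊗ₖ (1 : Matrix ιC ιC ℂ))) * Q)
        ((1 : Matrix (Fin n → ZMod 2) (Fin n → ZMod 2) ℂ) ⊗ₖ ((1 : Matrix ιB ιB ℂ) ⊗ₖ G t))
      have h2 := Matrix.l2_opNorm_mul
        (shiftMat (t : Fin n → ZMod 2) ⊗ₖ ((1 : Matrix ιB ιB ℂ) ⊗ₖ (1 : Matrix ιC ιC ℂ))) Q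
      have h3 := hStnorm t
      have h4 := hEtnorm t
      have h5 := norm_nonneg
        ((shiftMat (t : Fin n → ZMod 2) ⊗ₖ ((1 : Matrix ιB ιB ℂ) ⊗ₖ (1 : Matrix ιC ιC ℂ))) * Q)
      have h6 := norm_nonneg Q
      have h7 := norm_nonneg
        ((1 : Matrix (Fin n → ZMod 2) (Fin n → ZMod 2) ℂ) ⊗ₖ ((1 : Matrix ιB ιB ℂ) ⊗ₖ G t))
      have h8 := norm_nonneg (shiftMat (t : Fin n → ZMod 2) ⊗ₖ ((1 : Matrix ιB ιB ℂ) ⊗ₖ (1 : Matrix ιC ιC ℂ)))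
      nlinarith
    · rw [if_neg h, if_neg h, norm_zero]
  -- counting
  have hcount : ∑ t : ↥V, (if (t : Fin n → ZMod 2) ∈ W then (1 : ℝ) else 0) = 2 ^ d := by
    rw [Finset.sum_boole]
    have e : {t : ↥V // (t : Fin n → ZMod 2) ∈ W} ≃ ↥(V ⊓ W) :=
      { toFun := fun t => ⟨(t.1 : Fin n → ZMod 2), Submodule.mem_inf.mpr ⟨t.1.2, t.2⟩⟩
        invFun := fun u => ⟨⟨(u : Fin n → ZMod 2), (Submodule.mem_inf.mp u.2).1⟩,
          (Submodule.mem_inf.mp u.2).2⟩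
        left_inv := fun t => rfl
        right_inv := fun u => rfl }
    have hc : (Finset.filter (fun t : ↥V => (t : Fin n → ZMod 2) ∈ W) Finset.univ).card =
        Fintype.card ↥(V ⊓ W) := by
      rw [← Fintype.card_subtype]
      exact Fintype.card_congr e
    rw [hc, Module.card_eq_pow_finrank (K := ZMod 2), ZMod.card, ← hd]
    push_cast
    ring
  -- assemble the norm bound on QPQ
  have hnormQPQ : ‖Q * P * Q‖ ≤ (2 : ℝ) ^ d / 2 ^ k := by
    rw [hQPQ2, norm_smul]
    have h1 : ‖((2 : ℂ) ^ k)⁻¹‖ = ((2 : ℝ) ^ k)⁻¹ := by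
      rw [norm_inv, norm_pow]
      norm_num
    have h2 : ‖∑ t : ↥V,
        (if (t : Fin n → ZMod 2) ∈ W then
          (shiftMat (t : Fin n → ZMod 2) ⊗ₖ ((1 : Matrix ιB ιB ℂ) ⊗ₖ (1 : Matrix ιC ιC ℂ))) * Q *
            ((1 : Matrix (Fin n → ZMod 2) (Fin n → ZMod 2) ℂ) ⊗ₖ ((1 : Matrix ιB ιB ℂ) ⊗ₖ G t))
        else 0)‖ ≤ (2 : ℝ) ^ d := by
      refine le_trans (norm_sum_le _ _) ?_
      rw [← hcount]
      exact Finset.sum_le_sum fun t _ => hterm_norm t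
    rw [h1]
    calc ((2 : ℝ) ^ k)⁻¹ * _ ≤ ((2 : ℝ) ^ k)⁻¹ * (2 : ℝ) ^ d := by
          exact mul_le_mul_of_nonneg_left h2 (by positivity)
      _ = (2 : ℝ) ^ d / 2 ^ k := by ring
  -- final conclusion
  have heq : (P * Q)ᴴ * (P * Q) = Q * P * Q := by
    rw [Matrix.conjTranspose_mul, hPherm, hQherm, mul_assoc Q P (P * Q),
      ← mul_assoc P P Q, hPP, ← mul_assoc]
  have hfin : ‖P * Q‖ * ‖P * Q‖ ≤ (2 : ℝ) ^ d / 2 ^ k :=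
    (Matrix.l2_opNorm_conjTranspose_mul_self (P * Q)).symm.trans_le (heq ▸ hnormQPQ)
  have hX : (2 : ℝ) ^ ((d : ℤ) - (k : ℤ)) = (2 : ℝ) ^ d / 2 ^ k := by
    rw [zpow_sub₀ (by norm_num : (2 : ℝ) ≠ 0), zpow_natCast, zpow_natCast]
  rw [Real.le_sqrt (norm_nonneg _) (by positivity)]
  rw [pow_two, hX]
  exact hfin
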